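/- Let P be a partition in a set A and let {J_1, …, J_p} be a partition with R({J_j}) ⊆ R(P) that admits to P. Then the iterated quotient P/(J_1, …, J_p) equals the successive simple quotients by the restrictions of the original P: P/(J_1, …, J_p) = (⋯((P/P_(J_1))/P_(J_2))⋯)/P_(J_p), where at each step the restriction of the current partition to J_k equals P_(J_k). -/

import Mathlib

namespace PartitionOps

variable {α : Type*} [DecidableEq α]

/-- The support `R(P)` of a collection of finite sets: the union of its members. -/
def supp (P : Finset (Finset α)) : Finset α := P.sup id

/-- A partition in `A`: a finite collection of pairwise disjoint nonempty finite sets. -/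
def IsPartition (P : Finset (Finset α)) : Prop :=
  (∀ I ∈ P, I.Nonempty) ∧ ∀ I ∈ P, ∀ I' ∈ P, I ≠ I' → Disjoint I I'

/-- The restriction `P_(B) = { I ∩ B : I ∈ P, I ∩ B ≠ ∅ }`. -/
def restrict (P : Finset (Finset α)) (B : Finset α) : Finset (Finset α) :=
  (P.filter fun I => (I ∩ B).Nonempty).image (· ∩ B)

/-- `R_{P,B}`: the union of the members of `P` meeting `B`. -/
def RB (P : Finset (Finset α)) (B : Finset α) : Finset α :=
  (P.filter fun I => (I ∩ B).Nonempty).sup id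

/-- The quotient `P / P_(B)`: the members of `P` disjoint from `B`, together with
`R_{P,B} \ B` (omitted when empty). -/
def quot (P : Finset (Finset α)) (B : Finset α) : Finset (Finset α) :=
  (insert (RB P B \ B) (P.filter fun I => I ∩ B = ∅)).erase ∅

/-- Quotient of `P` by a partition `Q` (meaningful when `Q` coincides with the
restriction of `P` to the support of `Q`): `P / Q := P / P_(R(Q))`. -/
def quotBy (P Q : Finset (Finset α)) : Finset (Finset α) := quot P (supp Q)

/-- The iterated quotient `P/(J_1, …, J_p)`, defined recursively by
`P/(J_1) = P/P_(J_1)` and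
`P/(J_1, …, J_{k+1}) = (P/(J_1, …, J_k)) / (P/(J_1, …, J_k))_(J_{k+1})`. -/
def iterQuot (P : Finset (Finset α)) : List (Finset α) → Finset (Finset α)
  | [] => P
  | B :: Bs => iterQuot (quot P B) Bs

/-- A family `{J_j}` (given as a list) admits to `P`: `R({J_j}) ⊆ R(P)` and the sets
`R_{P,J_j}` are pairwise disjoint. -/
def AdmitsL (Js : List (Finset α)) (P : Finset (Finset α)) : Prop :=
  (∀ J ∈ Js, J ⊆ supp P) ∧
    Js.Pairwise fun J J' => Disjoint (RB P J) (RB P J')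

lemma mem_supp {P : Finset (Finset α)} {x : α} : x ∈ supp P ↔ ∃ I ∈ P, x ∈ I := by
  simp [supp, Finset.mem_sup]

lemma mem_RB {P : Finset (Finset α)} {B : Finset α} {x : α} :
    x ∈ RB P B ↔ ∃ I ∈ P, (I ∩ B).Nonempty ∧ x ∈ I := by
  simp [RB, Finset.mem_sup, and_assoc]

lemma subset_RB_of_mem {P : Finset (Finset α)} {B I : Finset α} (hI : I ∈ P)
    (h : (I ∩ B).Nonempty) : I ⊆ RB P B := fun x hx => mem_RB.2 ⟨I, hI, h, hx⟩

lemma subset_RB {P : Finset (Finset α)} {B : Finset α} (h : B ⊆ supp P) : B ⊆ RB P B := by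
  intro x hx
  obtain ⟨I, hI, hxI⟩ := mem_supp.1 (h hx)
  exact mem_RB.2 ⟨I, hI, ⟨x, Finset.mem_inter.2 ⟨hxI, hx⟩⟩, hxI⟩

lemma RB_subset_supp {P : Finset (Finset α)} {B : Finset α} : RB P B ⊆ supp P := by
  intro x hx
  obtain ⟨I, hI, _, hxI⟩ := mem_RB.1 hx
  exact mem_supp.2 ⟨I, hI, hxI⟩

lemma supp_restrict {P : Finset (Finset α)} {J : Finset α} (h : J ⊆ supp P) :
    supp (restrict P J) = J := by
  ext x
  simp only [supp, restrict, Finset.mem_sup, Finset.mem_image, Finset.mem_filter, id]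
  constructor
  · rintro ⟨S, ⟨I, ⟨hI, hne⟩, rfl⟩, hx⟩
    exact (Finset.mem_inter.1 hx).2
  · intro hx
    obtain ⟨I, hI, hxI⟩ := mem_supp.1 (h hx)
    exact ⟨I ∩ J, ⟨I, ⟨hI, ⟨x, Finset.mem_inter.2 ⟨hxI, hx⟩⟩⟩, rfl⟩,
      Finset.mem_inter.2 ⟨hxI, hx⟩⟩

lemma mem_quot {P : Finset (Finset α)} {B S : Finset α} :
    S ∈ quot P B ↔ S ≠ ∅ ∧ (S = RB P B \ B ∨ (S ∈ P ∧ S ∩ B = ∅)) := by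
  simp [quot, Finset.mem_erase, Finset.mem_insert, Finset.mem_filter, and_assoc]

lemma supp_quot {P : Finset (Finset α)} {B : Finset α} : supp (quot P B) = supp P \ B := by
  ext x
  simp only [Finset.mem_sdiff]
  constructor
  · intro hx
    obtain ⟨S, hS, hxS⟩ := mem_supp.1 hx
    obtain ⟨-, hS | ⟨hSP, hSB⟩⟩ := mem_quot.1 hS
    · subst hS
      have := Finset.mem_sdiff.1 hxS
      exact ⟨RB_subset_supp this.1, this.2⟩
    · refine ⟨mem_supp.2 ⟨S, hSP, hxS⟩, fun hxB => ?_⟩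
      have : x ∈ S ∩ B := Finset.mem_inter.2 ⟨hxS, hxB⟩
      simp [hSB] at this
  · rintro ⟨hx, hxB⟩
    obtain ⟨I, hI, hxI⟩ := mem_supp.1 hx
    by_cases hIB : (I ∩ B).Nonempty
    · refine mem_supp.2 ⟨RB P B \ B, mem_quot.2 ⟨?_, Or.inl rfl⟩,
        Finset.mem_sdiff.2 ⟨subset_RB_of_mem hI hIB hxI, hxB⟩⟩
      exact Finset.ne_empty_of_mem (Finset.mem_sdiff.2 ⟨subset_RB_of_mem hI hIB hxI, hxB⟩)
    · refine mem_supp.2 ⟨I, mem_quot.2 ⟨Finset.ne_empty_of_mem hxI, Or.inr ⟨hI, ?_⟩⟩, hxI⟩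
      exact Finset.not_nonempty_iff_eq_empty.1 hIB

lemma filter_quot {P : Finset (Finset α)} {B J : Finset α} (hB : B ⊆ supp P)
    (hJ : J ⊆ supp P) (hd : Disjoint (RB P B) (RB P J)) :
    (quot P B).filter (fun I => (I ∩ J).Nonempty) = P.filter (fun I => (I ∩ J).Nonempty) := by
  have hJR : J ⊆ RB P J := subset_RB hJ
  have hBR : B ⊆ RB P B := subset_RB hB
  ext S
  simp only [Finset.mem_filter, mem_quot]
  constructor
  · rintro ⟨⟨hne, hS | ⟨hSP, hSB⟩⟩, hSJ⟩
    · exfalso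
      obtain ⟨x, hx⟩ := hSJ
      rw [hS] at hx
      obtain ⟨hx1, hx2⟩ := Finset.mem_inter.1 hx
      simpa using hd.le_bot (Finset.mem_inter.2 ⟨(Finset.mem_sdiff.1 hx1).1, hJR hx2⟩)
    · exact ⟨hSP, hSJ⟩
  · rintro ⟨hSP, hSJ⟩
    have hSR : S ⊆ RB P J := subset_RB_of_mem hSP hSJ
    have hSB : S ∩ B = ∅ := by
      rw [← Finset.not_nonempty_iff_eq_empty]
      rintro ⟨x, hx⟩
      obtain ⟨hx1, hx2⟩ := Finset.mem_inter.1 hx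
      simpa using hd.le_bot (Finset.mem_inter.2 ⟨hBR hx2, hSR hx1⟩)
    refine ⟨⟨?_, Or.inr ⟨hSP, hSB⟩⟩, hSJ⟩
    obtain ⟨x, hx⟩ := hSJ
    exact Finset.ne_empty_of_mem (Finset.mem_inter.1 hx).1

lemma restrict_quot {P : Finset (Finset α)} {B J : Finset α} (hB : B ⊆ supp P)
    (hJ : J ⊆ supp P) (hd : Disjoint (RB P B) (RB P J)) :
    restrict (quot P B) J = restrict P J := by
  unfold restrict; rw [filter_quot hB hJ hd]

lemma RB_quot {P : Finset (Finset α)} {B J : Finset α} (hB : B ⊆ supp P)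
    (hJ : J ⊆ supp P) (hd : Disjoint (RB P B) (RB P J)) :
    RB (quot P B) J = RB P J := by
  unfold RB; rw [filter_quot hB hJ hd]

lemma restrict_iterQuot (J : Finset α) (Bs : List (Finset α)) :
    ∀ (P : Finset (Finset α)),
    (∀ B ∈ Bs, B ⊆ supp P) → J ⊆ supp P →
    (∀ B ∈ Bs, Disjoint (RB P B) (RB P J)) →
    (Bs.Pairwise fun B B' => Disjoint (RB P B) (RB P B')) →
    restrict (iterQuot P Bs) J = restrict P J := by
  induction Bs with
  | nil => intro P _ _ _ _; rfl
  | cons B Bs ih =>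
    intro P hsub hJ hd hp
    have hB : B ⊆ supp P := hsub B (List.mem_cons_self)
    have hdBJ := hd B (List.mem_cons_self)
    rw [List.pairwise_cons] at hp
    have key : ∀ X, X ⊆ supp P → Disjoint (RB P B) (RB P X) → X ⊆ supp (quot P B) := by
      intro X hX hdx x hx
      rw [supp_quot]
      refine Finset.mem_sdiff.2 ⟨hX hx, fun hxB => ?_⟩
      simpa using hdx.le_bot (Finset.mem_inter.2 ⟨subset_RB hB hxB, subset_RB hX hx⟩)
    show restrict (iterQuot (quot P B) Bs) J = restrict P J
    rw [ih (quot P B) ?_ ?_ ?_ ?_, restrict_quot hB hJ hdBJ]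
    · intro B' hB'; exact key B' (hsub B' (List.mem_cons_of_mem _ hB')) (hp.1 B' hB')
    · exact key J hJ hdBJ
    · intro B' hB'
      rw [RB_quot hB (hsub B' (List.mem_cons_of_mem _ hB')) (hp.1 B' hB'),
          RB_quot hB hJ hdBJ]
      exact hd B' (List.mem_cons_of_mem _ hB')
    · refine hp.2.imp_of_mem ?_
      intro B1 B2 h1 h2 hdd
      rw [RB_quot hB (hsub B1 (List.mem_cons_of_mem _ h1)) (hp.1 B1 h1),
          RB_quot hB (hsub B2 (List.mem_cons_of_mem _ h2)) (hp.1 B2 h2)]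
      exact hdd

lemma foldl_aux (P : Finset (Finset α)) (Js : List (Finset α)) :
    ∀ (Q : Finset (Finset α)), (∀ J ∈ Js, J ⊆ supp P) →
    Js.foldl (fun Q J => quotBy Q (restrict P J)) Q = iterQuot Q Js := by
  induction Js with
  | nil => intro Q _; rfl
  | cons J Js ih =>
    intro Q hsub
    have : quotBy Q (restrict P J) = quot Q J := by
      unfold quotBy
      rw [supp_restrict (hsub J (List.mem_cons_self))]
    simp only [List.foldl_cons, this, iterQuot]
    exact ih _ (fun J' hJ' => hsub J' (List.mem_cons_of_mem _ hJ'))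


/-- if the partition `{J_1, …, J_p}` admits to `P`, the iterated
quotient `P/(J_1, …, J_p)` equals the successive simple quotients by the restrictions
of the original `P`, `(⋯((P/P_(J_1))/P_(J_2))⋯)/P_(J_p)`, and at each step the
restriction of the current partition to `J_k` equals `P_(J_k)`. -/
theorem iterQuot_eq_foldl_quotBy (P : Finset (Finset α)) (hP : IsPartition P)
    (Js : List (Finset α)) (hne : ∀ J ∈ Js, J.Nonempty)
    (hdisj : Js.Pairwise Disjoint) (hnd : Js.Nodup) (hadm : AdmitsL Js P) :
    iterQuot P Js = Js.foldl (fun Q J => quotBy Q (restrict P J)) P ∧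
      ∀ k : Fin Js.length,
        restrict (iterQuot P (Js.take k)) (Js.get k) = restrict P (Js.get k) := by
  obtain ⟨hsub, hpair⟩ := hadm
  constructor
  · exact (foldl_aux P Js P hsub).symm
  · intro k
    apply restrict_iterQuot
    · intro B hB; exact hsub B (List.mem_of_mem_take hB)
    · exact hsub _ (Js.get_mem k)
    · intro B hB
      obtain ⟨i, hget⟩ := List.mem_iff_get.1 hB
      have hlt : (i : ℕ) < (k : ℕ) := lt_of_lt_of_le i.isLt (by simp [List.length_take])
      have : (Js.take k).get i = Js.get ⟨i, lt_of_lt_of_le hlt (le_of_lt k.isLt)⟩ := by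
        simp
      rw [← hget, this]
      exact List.pairwise_iff_get.1 hpair _ k hlt
    · exact hpair.sublist (List.take_sublist _ _)


end PartitionOps
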